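/- For 0 < α < 1, the map ζ ↦ √(ζ - α²) - α·arccos(α/√ζ) is a strictly increasing continuous bijection from [α², ∞) onto [0, ∞); consequently, for each 0 < y < 1-α² there is a unique ζ = ζ(y) ≥ α² with arccos(√y/√(1-α²)) - (α/2)·arccos((y(1+α²)-(1-α²))/((1-α²)(1-y))) = √(ζ-α²) - α·arccos(α/√ζ). -/

import Mathlib

open Set Real

lemma div_le_arctan {s : ℝ} (hs : 0 ≤ s) : s / (1 + s ^ 2) ≤ Real.arctan s := by
  have key : ∀ x : ℝ, HasDerivAt (fun x : ℝ => Real.arctan x - x / (1 + x ^ 2))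
      (1 / (1 + x ^ 2) - (1 * (1 + x ^ 2) - x * (2 * x)) / (1 + x ^ 2) ^ 2) x := by
    intro x
    have h1 : (1 : ℝ) + x ^ 2 ≠ 0 := by positivity
    have hd : HasDerivAt (fun x : ℝ => x / (1 + x ^ 2))
        ((1 * (1 + x ^ 2) - x * (2 * x)) / (1 + x ^ 2) ^ 2) x := by
      exact (hasDerivAt_id x).div (by simpa using ((hasDerivAt_pow 2 x).const_add 1)) h1
    exact (Real.hasDerivAt_arctan x).sub hd
  have hmono : MonotoneOn (fun x : ℝ => Real.arctan x - x / (1 + x ^ 2)) (Icc 0 s) := by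
    apply monotoneOn_of_deriv_nonneg (convex_Icc 0 s)
    · exact fun x hx => ((key x).continuousAt).continuousWithinAt
    · exact fun x hx => ((key x).differentiableAt).differentiableWithinAt
    · intro x hx
      rw [(key x).deriv]
      have h1 : (0:ℝ) < 1 + x ^ 2 := by positivity
      rw [sub_nonneg, div_le_div_iff₀ (by positivity) h1]
      nlinarith [sq_nonneg x, sq_nonneg (x^2)]
  have h0 : (0:ℝ) ∈ Icc 0 s := ⟨le_refl 0, hs⟩
  have hs' : s ∈ Icc 0 s := ⟨hs, le_refl s⟩
  have := hmono h0 hs' hs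
  simp [Real.arctan_zero] at this
  linarith

lemma alpha_arctan_le {t a : ℝ} (ht : 0 < t) (ha : 0 < a) (ha1 : a ≤ 1) :
    a * Real.arctan (t / a) ≤ Real.arctan t := by
  have key : ∀ x ∈ Ioo a 1, HasDerivAt (fun x : ℝ => x * Real.arctan (t / x))
      (1 * Real.arctan (t / x) + x * (1 / (1 + (t / x) ^ 2) * (t * -(x ^ 2)⁻¹))) x := by
    intro x hx
    have hx0 : x ≠ 0 := ne_of_gt (lt_trans ha hx.1)
    have hi : HasDerivAt (fun x : ℝ => t / x) (t * -(x ^ 2)⁻¹) x := by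
      simpa [div_eq_mul_inv] using (hasDerivAt_inv hx0).const_mul t
    exact (hasDerivAt_id x).mul ((Real.hasDerivAt_arctan (t / x)).comp x hi)
  rcases eq_or_lt_of_le ha1 with rfl | ha1'
  · simp
  have hmono : MonotoneOn (fun x : ℝ => x * Real.arctan (t / x)) (Icc a 1) := by
    apply monotoneOn_of_deriv_nonneg (convex_Icc a 1)
    · apply ContinuousOn.mul continuousOn_id
      apply Real.continuous_arctan.comp_continuousOn
      exact continuousOn_const.div continuousOn_id (fun x hx => ne_of_gt (lt_of_lt_of_le ha hx.1))
    · intro x hx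
      rw [interior_Icc] at hx
      exact ((key x hx).differentiableAt).differentiableWithinAt
    · intro x hx
      rw [interior_Icc] at hx
      rw [(key x hx).deriv]
      have hx0 : 0 < x := lt_trans ha hx.1
      have harc := div_le_arctan (s := t / x) (le_of_lt (div_pos ht hx0))
      have heq : x * (1 / (1 + (t / x) ^ 2) * (t * -(x ^ 2)⁻¹)) = -((t/x) / (1 + (t/x)^2)) := by
        field_simp
      rw [heq]
      linarith
  have := hmono ⟨le_refl a, ha1⟩ ⟨ha1, le_refl 1⟩ ha1
  simpa using this
lemma arccos_ratio {x : ℝ} (hx : 0 ≤ x) :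
    Real.arccos ((1 - x ^ 2) / (1 + x ^ 2)) = 2 * Real.arctan x := by
  have h1 : (0:ℝ) < 1 + x ^ 2 := by positivity
  have hc : Real.cos (2 * Real.arctan x) = (1 - x ^ 2) / (1 + x ^ 2) := by
    rw [Real.cos_two_mul, Real.cos_arctan]
    have : (1 / Real.sqrt (1 + x ^ 2)) ^ 2 = 1 / (1 + x ^ 2) := by
      rw [div_pow, one_pow, Real.sq_sqrt (le_of_lt h1)]
    rw [this]
    field_simp
    ring
  rw [← hc, Real.arccos_cos]
  · have : 0 ≤ Real.arctan x := by
      rw [← Real.arctan_zero]; exact Real.arctan_strictMono.monotone hx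
    linarith
  · have := Real.arctan_lt_pi_div_two x
    linarith

lemma lhs_nonneg {α y : ℝ} (hα0 : 0 < α) (hα1 : α < 1) (hy0 : 0 < y) (hy1 : y < 1 - α ^ 2) :
    0 ≤ Real.arccos (Real.sqrt y / Real.sqrt (1 - α ^ 2)) -
        (α / 2) * Real.arccos ((y * (1 + α ^ 2) - (1 - α ^ 2)) / ((1 - α ^ 2) * (1 - y))) := by
  have h1a : (0:ℝ) < 1 - α ^ 2 := by nlinarith
  obtain ⟨u, hu0, hu1, hyu⟩ : ∃ u : ℝ, 0 < u ∧ u < 1 ∧ y = u * (1 - α ^ 2) :=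
    ⟨y / (1 - α ^ 2), div_pos hy0 h1a, (div_lt_one h1a).mpr hy1, by field_simp⟩
  subst hyu
  have hsq : Real.sqrt (u * (1 - α ^ 2)) / Real.sqrt (1 - α ^ 2) = Real.sqrt u := by
    rw [Real.sqrt_mul (le_of_lt hu0), mul_div_assoc,
      div_self (ne_of_gt (Real.sqrt_pos.mpr h1a)), mul_one]
  set x0 : ℝ := Real.sqrt (1 - u) / Real.sqrt u with hx0_def
  have hx0pos : 0 < x0 := div_pos (Real.sqrt_pos.mpr (by linarith)) (Real.sqrt_pos.mpr hu0)
  have hx0sq : x0 ^ 2 = (1 - u) / u := by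
    rw [hx0_def, div_pow, Real.sq_sqrt (by linarith : (0:ℝ) ≤ 1 - u), Real.sq_sqrt (le_of_lt hu0)]
  have hden : (0:ℝ) < 1 - u * (1 - α ^ 2) := by nlinarith
  have harg : (u * (1 - α ^ 2) * (1 + α ^ 2) - (1 - α ^ 2)) / ((1 - α ^ 2) * (1 - u * (1 - α ^ 2))) =
      (1 - (x0 / α) ^ 2) / (1 + (x0 / α) ^ 2) := by
    rw [div_pow, hx0sq]
    have hq : (0:ℝ) < (1 - u) / u := div_pos (by linarith) hu0
    rw [div_eq_div_iff (ne_of_gt (mul_pos h1a hden)) (by positivity)]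
    field_simp
    ring
  rw [hsq, harg, arccos_ratio (le_of_lt (div_pos hx0pos hα0))]
  have htheta : Real.arccos (Real.sqrt u) = Real.arctan x0 := by
    rw [Real.arccos_eq_arctan (Real.sqrt_pos.mpr hu0), Real.sq_sqrt (le_of_lt hu0)]
  rw [htheta]
  have := alpha_arctan_le (t := x0) (a := α) hx0pos hα0 (le_of_lt hα1)
  linarith
lemma f_hasDerivAt {α ζ : ℝ} (hα0 : 0 < α) (hζ : α ^ 2 < ζ) :
    HasDerivAt (fun ζ : ℝ => Real.sqrt (ζ - α ^ 2) - α * Real.arccos (α / Real.sqrt ζ))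
      (Real.sqrt (ζ - α ^ 2) / (2 * ζ)) ζ := by
  have hζ0 : 0 < ζ := lt_trans (by positivity) hζ
  set s : ℝ := Real.sqrt ζ with hs_def
  set r : ℝ := Real.sqrt (ζ - α ^ 2) with hr_def
  have hs : 0 < s := Real.sqrt_pos.mpr hζ0
  have hr : 0 < r := Real.sqrt_pos.mpr (by linarith)
  have hs2 : s ^ 2 = ζ := Real.sq_sqrt (le_of_lt hζ0)
  have hr2 : r ^ 2 = ζ - α ^ 2 := Real.sq_sqrt (by linarith)
  have hsα : α < s := by nlinarith
  -- derivative of sqrt part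
  have h2 : HasDerivAt (fun ζ : ℝ => Real.sqrt (ζ - α ^ 2)) (1 / (2 * r) * 1) ζ := by
    exact (Real.hasDerivAt_sqrt (by linarith : ζ - α ^ 2 ≠ 0)).comp ζ
      ((hasDerivAt_id ζ).sub_const _)
  -- derivative of inner α / √ζ
  have hinner : HasDerivAt (fun ζ : ℝ => α / Real.sqrt ζ) (α * (-(1 / (2 * s)) / s ^ 2)) ζ := by
    have := ((Real.hasDerivAt_sqrt (ne_of_gt hζ0)).inv (ne_of_gt hs)).const_mul α
    simpa [div_eq_mul_inv] using this
  -- arccos side conditions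
  have hx1 : α / s < 1 := (div_lt_one hs).mpr hsα
  have hx0 : 0 < α / s := div_pos hα0 hs
  have harccos : HasDerivAt (fun ζ : ℝ => Real.arccos (α / Real.sqrt ζ))
      (-(1 / Real.sqrt (1 - (α / s) ^ 2)) * (α * (-(1 / (2 * s)) / s ^ 2))) ζ := by
    exact (Real.hasDerivAt_arccos (x := α / s) (by linarith) (ne_of_lt hx1)).comp (h := fun ζ => α / Real.sqrt ζ) ζ hinner
  have htotal := h2.sub (harccos.const_mul α)
  refine htotal.congr_deriv ?_
  symm
  have hrs : Real.sqrt (1 - (α / s) ^ 2) = r / s := by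
    rw [show 1 - (α / s) ^ 2 = (r / s) ^ 2 by
      rw [div_pow, div_pow, hr2, hs2]; field_simp]
    exact Real.sqrt_sq (le_of_lt (div_pos hr hs))
  rw [hrs]
  have hζs : ζ = s ^ 2 := hs2.symm
  rw [hζs]
  have hr2' : r ^ 2 = s ^ 2 - α ^ 2 := by rw [hs2]; exact hr2
  field_simp
  linear_combination hr2'

theorem zeta_map_bijection (α : ℝ) (hα0 : 0 < α) (hα1 : α < 1) :
    StrictMonoOn (fun ζ : ℝ => Real.sqrt (ζ - α ^ 2) - α * Real.arccos (α / Real.sqrt ζ))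
      (Ici (α ^ 2)) ∧
    ContinuousOn (fun ζ : ℝ => Real.sqrt (ζ - α ^ 2) - α * Real.arccos (α / Real.sqrt ζ))
      (Ici (α ^ 2)) ∧
    (fun ζ : ℝ => Real.sqrt (ζ - α ^ 2) - α * Real.arccos (α / Real.sqrt ζ)) '' Ici (α ^ 2) =
      Ici 0 ∧
    ∀ y : ℝ, 0 < y → y < 1 - α ^ 2 →
      ∃! ζ : ℝ, α ^ 2 ≤ ζ ∧
        Real.arccos (Real.sqrt y / Real.sqrt (1 - α ^ 2)) -
            (α / 2) * Real.arccos ((y * (1 + α ^ 2) - (1 - α ^ 2)) / ((1 - α ^ 2) * (1 - y))) =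
          Real.sqrt (ζ - α ^ 2) - α * Real.arccos (α / Real.sqrt ζ) := by
  set f : ℝ → ℝ := fun ζ : ℝ => Real.sqrt (ζ - α ^ 2) - α * Real.arccos (α / Real.sqrt ζ)
    with hf_def
  have hcont : ContinuousOn f (Ici (α ^ 2)) := by
    apply ContinuousOn.sub
    · exact (Real.continuous_sqrt.comp (continuous_sub_right _)).continuousOn
    · apply ContinuousOn.mul continuousOn_const
      apply Real.continuous_arccos.comp_continuousOn
      apply ContinuousOn.div continuousOn_const Real.continuous_sqrt.continuousOn
      intro x hx
      have : 0 < x := lt_of_lt_of_le (by positivity) hx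
      exact ne_of_gt (Real.sqrt_pos.mpr this)
  have hmono : StrictMonoOn f (Ici (α ^ 2)) := by
    apply strictMonoOn_of_deriv_pos (convex_Ici _) hcont
    intro x hx
    rw [interior_Ici] at hx
    have hx' : α ^ 2 < x := hx
    rw [(f_hasDerivAt hα0 hx').deriv]
    have hx0 : 0 < x := lt_trans (by positivity) hx'
    have : 0 < Real.sqrt (x - α ^ 2) := Real.sqrt_pos.mpr (by linarith)
    positivity
  have hf0 : f (α ^ 2) = 0 := by
    simp only [hf_def, sub_self, Real.sqrt_zero, Real.sqrt_sq (le_of_lt hα0),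
      div_self (ne_of_gt hα0), Real.arccos_one, mul_zero, sub_zero]
  have himg : f '' Ici (α ^ 2) = Ici 0 := by
    apply Subset.antisymm
    · rintro _ ⟨x, hx, rfl⟩
      rw [mem_Ici, ← hf0]
      exact hmono.monotoneOn (mem_Ici.mpr le_rfl) hx hx
    · intro c hc
      rw [mem_Ici] at hc
      set b : ℝ := α ^ 2 + (c + α * Real.pi) ^ 2 with hb_def
      have hb : α ^ 2 ≤ b := by nlinarith [sq_nonneg (c + α * Real.pi)]
      have hcπ : 0 ≤ c + α * Real.pi := by positivity
      have hfb : c ≤ f b := by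
        have h1 : Real.sqrt (b - α ^ 2) = c + α * Real.pi := by
          rw [hb_def]; rw [add_sub_cancel_left]; exact Real.sqrt_sq hcπ
        have h2 : α * Real.arccos (α / Real.sqrt b) ≤ α * Real.pi :=
          mul_le_mul_of_nonneg_left (Real.arccos_le_pi _) (le_of_lt hα0)
        simp only [hf_def]
        rw [h1]
        linarith
      have := intermediate_value_Icc hb (hcont.mono Icc_subset_Ici_self)
      have hcmem : c ∈ Icc (f (α ^ 2)) (f b) := by rw [hf0]; exact ⟨hc, hfb⟩
      obtain ⟨x, hx, hfx⟩ := this hcmem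
      exact ⟨x, hx.1, hfx⟩
  refine ⟨hmono, hcont, himg, ?_⟩
  intro y hy0 hy1
  set L : ℝ := Real.arccos (Real.sqrt y / Real.sqrt (1 - α ^ 2)) -
      (α / 2) * Real.arccos ((y * (1 + α ^ 2) - (1 - α ^ 2)) / ((1 - α ^ 2) * (1 - y)))
    with hL_def
  have hL : 0 ≤ L := lhs_nonneg hα0 hα1 hy0 hy1
  have : L ∈ f '' Ici (α ^ 2) := by rw [himg]; exact hL
  obtain ⟨ζ, hζ, hfζ⟩ := this
  refine ⟨ζ, ⟨hζ, hfζ.symm⟩, ?_⟩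
  rintro ζ' ⟨hζ', hfζ'⟩
  exact hmono.injOn hζ' hζ (hfζ'.symm.trans hfζ.symm)
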